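/- Let t₀ > 0 and k ≥ 0 be real numbers and let h : ℝ → ℝ be continuous on [0, t₀). With w(t) = t^(−k) · ∫₀ᵗ sᵏ h(s) ds for t ∈ (0, t₀), the derivative w′(t) = −(k/t)·w(t) + h(t) converges to h(0)/(k+1) as t → 0⁺; in particular the right-hand side of the Fuchsian equation extends continuously to t = 0. -/

import Mathlib

open MeasureTheory intervalIntegral Set Filter Topology

/-- With `w(t) = t^(−k) · ∫₀ᵗ sᵏ h(s) ds` on `(0, t₀)`, the derivative
`w′(t) = −(k/t)·w(t) + h(t)` converges to `h(0)/(k+1)` as `t → 0⁺`; in particular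
the right-hand side of the Fuchsian equation extends continuously to `t = 0`. -/
theorem stmt_5 (t₀ k : ℝ) (ht₀ : 0 < t₀) (hk : 0 ≤ k) (h : ℝ → ℝ)
    (hcont : ContinuousOn h (Set.Ico 0 t₀)) :
    Filter.Tendsto
      (fun t : ℝ => -(k / t) * (t ^ (-k) * ∫ s in (0 : ℝ)..t, s ^ k * h s) + h t)
      (𝓝[>] 0) (𝓝 (h 0 / (k + 1))) := by
  have hrpow : Continuous (fun s : ℝ => s ^ k) := Real.continuous_rpow_const hk
  have hk1 : (0:ℝ) < k + 1 := by linarith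
  have key : Tendsto (fun t : ℝ => t ^ (-(k+1)) * ∫ s in (0:ℝ)..t, s ^ k * h s)
      (𝓝[>] 0) (𝓝 (h 0 / (k + 1))) := by
    rw [Metric.tendsto_nhdsWithin_nhds]
    intro ε hε
    have h0 : Tendsto h (𝓝[Ico 0 t₀] 0) (𝓝 (h 0)) := hcont 0 ⟨le_refl 0, ht₀⟩
    rw [Metric.tendsto_nhdsWithin_nhds] at h0
    obtain ⟨δ, hδ, hδ'⟩ := h0 (ε * (k+1) / 2) (by positivity)
    refine ⟨min δ t₀, lt_min hδ ht₀, fun {t} ht htd => ?_⟩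
    have htp : (0:ℝ) < t := ht
    rw [Real.dist_eq, sub_zero] at htd
    have htδ : t < δ := lt_of_abs_lt (lt_of_lt_of_le htd (min_le_left _ _))
    have htt₀ : t < t₀ := lt_of_abs_lt (lt_of_lt_of_le htd (min_le_right _ _))
    have hsub : Icc (0:ℝ) t ⊆ Ico 0 t₀ := fun s hs => ⟨hs.1, lt_of_le_of_lt hs.2 htt₀⟩
    have hint : IntervalIntegrable (fun s => s ^ k * h s) volume 0 t := by
      refine ContinuousOn.intervalIntegrable ?_
      rw [uIcc_of_le htp.le]
      exact hrpow.continuousOn.mul (hcont.mono hsub)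
    have hintc : IntervalIntegrable (fun s : ℝ => s ^ k * (ε * (k+1) / 2)) volume 0 t :=
      (hrpow.mul continuous_const).intervalIntegrable 0 t
    set c := ε * (k+1) / 2 with hc
    have hpow_int : ∫ s in (0:ℝ)..t, s ^ k = t ^ (k+1) / (k+1) := by
      rw [integral_rpow (Or.inl (by linarith)), Real.zero_rpow (ne_of_gt hk1), sub_zero]
    have hcpos : 0 < c := by rw [hc]; positivity
    have hval : (∫ s in (0:ℝ)..t, s ^ k * c) = c * (t ^ (k+1) / (k+1)) := by
      rw [intervalIntegral.integral_mul_const, hpow_int]; ring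
    have hbound : ‖∫ s in (0:ℝ)..t, s ^ k * (h s - h 0)‖ ≤ c * (t ^ (k+1) / (k+1)) := by
      have hnle := norm_integral_le_abs_of_norm_le (μ := volume) (a := 0) (b := t)
        (f := fun s => s ^ k * (h s - h 0)) (g := fun s => s ^ k * c) ?_ hintc
      · calc ‖∫ s in (0:ℝ)..t, s ^ k * (h s - h 0)‖ ≤ |∫ s in (0:ℝ)..t, s ^ k * c| := hnle
          _ = c * (t ^ (k+1) / (k+1)) := by
              rw [hval, abs_of_nonneg]
              have : (0:ℝ) ≤ t ^ (k+1) := Real.rpow_nonneg htp.le _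
              positivity
      · rw [Filter.eventually_iff_exists_mem]
        refine ⟨Set.uIoc 0 t, self_mem_ae_restrict measurableSet_uIoc, fun s hs => ?_⟩
        rw [uIoc_of_le htp.le] at hs
        have hs0 : (0:ℝ) ≤ s := hs.1.le
        have hsk : (0:ℝ) ≤ s ^ k := Real.rpow_nonneg hs0 k
        have hhs : |h s - h 0| ≤ c := by
          have := hδ' ⟨hs0, lt_of_le_of_lt hs.2 htt₀⟩
            (by rw [Real.dist_eq, sub_zero, abs_of_nonneg hs0]; exact lt_of_le_of_lt hs.2 htδ)
          rw [Real.dist_eq] at this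
          exact this.le
        rw [Real.norm_eq_abs, abs_mul, abs_of_nonneg hsk]
        exact mul_le_mul_of_nonneg_left hhs hsk
    have hint0 : IntervalIntegrable (fun s : ℝ => s ^ k * h 0) volume 0 t :=
      (hrpow.mul continuous_const).intervalIntegrable 0 t
    have hsub' : (∫ s in (0:ℝ)..t, s ^ k * (h s - h 0))
        = (∫ s in (0:ℝ)..t, s ^ k * h s) - ∫ s in (0:ℝ)..t, s ^ k * h 0 := by
      rw [← integral_sub hint hint0]
      congr 1; ext s; ring
    have hsplit : (∫ s in (0:ℝ)..t, s ^ k * h s)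
        = (∫ s in (0:ℝ)..t, s ^ k * (h s - h 0)) + h 0 * (t ^ (k+1) / (k+1)) := by
      rw [hsub', intervalIntegral.integral_mul_const, hpow_int]; ring
    have hcancel : t ^ (-(k+1)) * t ^ (k+1) = 1 := by
      rw [← Real.rpow_add htp, show -(k+1) + (k+1) = (0:ℝ) by ring, Real.rpow_zero]
    have htpk : (0:ℝ) < t ^ (-(k+1)) := Real.rpow_pos_of_pos htp _
    rw [Real.dist_eq]
    have heq : t ^ (-(k+1)) * (∫ s in (0:ℝ)..t, s ^ k * h s) - h 0 / (k+1)
        = t ^ (-(k+1)) * (∫ s in (0:ℝ)..t, s ^ k * (h s - h 0)) := by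
      have hthis : t ^ (-(k+1)) * (h 0 * (t ^ (k+1) / (k+1))) = h 0 / (k+1) := by
        rw [show t ^ (-(k+1)) * (h 0 * (t ^ (k+1) / (k+1)))
            = (t ^ (-(k+1)) * t ^ (k+1)) * (h 0 / (k+1)) from by ring, hcancel, one_mul]
      rw [hsplit, mul_add, hthis]
      ring
    rw [heq, abs_mul, abs_of_pos htpk]
    calc t ^ (-(k+1)) * |∫ s in (0:ℝ)..t, s ^ k * (h s - h 0)|
        ≤ t ^ (-(k+1)) * (c * (t ^ (k+1) / (k+1))) := by
          exact mul_le_mul_of_nonneg_left (by simpa using hbound) htpk.le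
      _ = c / (k+1) * (t ^ (-(k+1)) * t ^ (k+1)) := by ring
      _ = ε / 2 := by rw [hcancel, hc]; field_simp
      _ < ε := by linarith
  have hh : Tendsto h (𝓝[>] 0) (𝓝 (h 0)) := by
    have h0 : Tendsto h (𝓝[Ico 0 t₀] 0) (𝓝 (h 0)) := hcont 0 ⟨le_refl 0, ht₀⟩
    refine h0.mono_left ?_
    rw [← nhdsWithin_Ioo_eq_nhdsGT ht₀]
    exact nhdsWithin_mono _ Ioo_subset_Ico_self
  have comb := (key.const_mul (-k)).add hh
  have harith : -k * (h 0 / (k + 1)) + h 0 = h 0 / (k + 1) := by field_simp; ring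
  rw [harith] at comb
  refine comb.congr' ?_
  filter_upwards [self_mem_nhdsWithin] with t ht
  have htp : (0:ℝ) < t := ht
  have hpow : t ^ (-(k+1)) = t ^ (-k) * t⁻¹ := by
    rw [show -(k+1) = -k + -1 by ring, Real.rpow_add htp, Real.rpow_neg_one]
  rw [hpow, div_eq_mul_inv]
  ring
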